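/- (Tightness of the semidefinite relaxation.) In the secure-delivery setup, suppose there exists an R1-feasible family (W*_ρ)_{ρ∈S} with rank(W*_ρ) ≤ 1 for all ρ that is optimal for R1, i.e., Σ_{ρ∈S} tr(W*_ρ) ≤ Σ_{ρ∈S} tr(W_ρ) for every R1-feasible family (W_ρ). Then the set of R0-feasible families is nonempty and the infimum of Σ_{ρ∈S} ‖w_ρ‖² over R0-feasible families (w_ρ) equals Σ_{ρ∈S} tr(W*_ρ), which is the infimum of Σ_{ρ∈S} tr(W_ρ) over R1-feasible families. -/

import Mathlib

open Matrix ComplexOrder Finset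

/-- Outer product `w wᴴ` of a complex column vector with its conjugate transpose. -/
def outerProd {n : ℕ} (w : Fin n → ℂ) : Matrix (Fin n) (Fin n) ℂ :=
  Matrix.vecMulVec w (star w)

/-- R0-feasibility of a family of beamforming vectors `(w_ρ)_{ρ ∈ S}`:
per-BS big-M power constraints C4, per-BS power constraints C5, the QoS
constraints C6 in affine form, and the secrecy constraints C7. -/
def R0Feasible {n Ne : ℕ} {M S : Type*} [Fintype M] [Fintype S] [DecidableEq S]
    (Λ : M → Matrix (Fin n) (Fin n) ℂ) (P : M → ℝ) (q : M → S → ℝ)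
    (hch : S → Fin n → ℂ) (G : Matrix (Fin n) (Fin Ne) ℂ)
    (σ2 σe2 : ℝ) (κreq κtol : S → ℝ) (w : S → Fin n → ℂ) : Prop :=
  (∀ m ρ, (star (w ρ) ⬝ᵥ (Λ m) *ᵥ (w ρ)).re ≤ q m ρ * P m) ∧
  (∀ m, ∑ ρ : S, (star (w ρ) ⬝ᵥ (Λ m) *ᵥ (w ρ)).re ≤ P m) ∧
  (∀ ρ : S, σ2 + ∑ ρ' ∈ Finset.univ.erase ρ, ‖star (hch ρ) ⬝ᵥ w ρ'‖ ^ 2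
      ≤ (κreq ρ)⁻¹ * ‖star (hch ρ) ⬝ᵥ w ρ‖ ^ 2) ∧
  (∀ ρ : S, ((1 : Matrix (Fin Ne) (Fin Ne) ℂ)
      + ((σe2⁻¹ : ℝ) : ℂ) • (Gᴴ * outerProd (w ρ) * G)).det
        ≤ ((1 + κtol ρ : ℝ) : ℂ))

/-- R1-feasibility of a family of PSD matrices `(W_ρ)_{ρ ∈ S}`: the SDP
relaxation of R0 with constraints C4–C7 rewritten linearly in `W_ρ`. -/
def R1Feasible {n Ne : ℕ} {M S : Type*} [Fintype M] [Fintype S] [DecidableEq S]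
    (Λ : M → Matrix (Fin n) (Fin n) ℂ) (P : M → ℝ) (q : M → S → ℝ)
    (hch : S → Fin n → ℂ) (G : Matrix (Fin n) (Fin Ne) ℂ)
    (σ2 σe2 : ℝ) (κreq κtol : S → ℝ) (W : S → Matrix (Fin n) (Fin n) ℂ) : Prop :=
  (∀ ρ : S, (W ρ).PosSemidef) ∧
  (∀ m ρ, ((Λ m * W ρ).trace).re ≤ q m ρ * P m) ∧
  (∀ m, ∑ ρ : S, ((Λ m * W ρ).trace).re ≤ P m) ∧
  (∀ ρ : S, σ2 + ∑ ρ' ∈ Finset.univ.erase ρ, ((W ρ' * outerProd (hch ρ)).trace).re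
      ≤ (κreq ρ)⁻¹ * ((W ρ * outerProd (hch ρ)).trace).re) ∧
  (∀ ρ : S, (((σe2 * κtol ρ : ℝ) : ℂ) • (1 : Matrix (Fin Ne) (Fin Ne) ℂ)
      - Gᴴ * W ρ * G).PosSemidef)


section AuxLemmas

open Complex

lemma outerProd_apply {n : ℕ} (w : Fin n → ℂ) (i j : Fin n) :
    outerProd w i j = w i * (starRingEnd ℂ) (w j) := rfl

lemma trace_mul_outerProd {n : ℕ} (A : Matrix (Fin n) (Fin n) ℂ) (w : Fin n → ℂ) :
    (A * outerProd w).trace = star w ⬝ᵥ A *ᵥ w := by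
  simp only [Matrix.trace, Matrix.diag, Matrix.mul_apply, outerProd_apply,
    dotProduct, Matrix.mulVec, Pi.star_apply, Finset.mul_sum, RCLike.star_def]
  refine Finset.sum_congr rfl fun i _ => Finset.sum_congr rfl fun j _ => ?_
  ring

lemma outerProd_mulVec {n : ℕ} (w x : Fin n → ℂ) :
    outerProd w *ᵥ x = (star w ⬝ᵥ x) • w := by
  ext i
  simp only [Matrix.mulVec, dotProduct, outerProd_apply, Pi.smul_apply, Pi.star_apply,
    smul_eq_mul, Finset.sum_mul, RCLike.star_def]
  refine Finset.sum_congr rfl fun j _ => by ring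

lemma star_dot_outerProd {n : ℕ} (w h : Fin n → ℂ) :
    star h ⬝ᵥ outerProd w *ᵥ h = (star h ⬝ᵥ w) * (starRingEnd ℂ) (star h ⬝ᵥ w) := by
  rw [outerProd_mulVec, dotProduct_smul, smul_eq_mul, mul_comm]
  congr 1
  simp only [dotProduct, map_sum, Pi.star_apply, RCLike.star_def]
  refine Finset.sum_congr rfl fun j _ => ?_
  rw [_root_.map_mul, Complex.conj_conj]
  ring

lemma conj_mul_self_nonneg (z : ℂ) : 0 ≤ z * (starRingEnd ℂ) z := by
  rw [Complex.mul_conj]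
  exact_mod_cast Complex.normSq_nonneg z

lemma conj_mul_self_re (z : ℂ) : (z * (starRingEnd ℂ) z).re = ‖z‖ ^ 2 := by
  rw [Complex.mul_conj]
  rw [Complex.ofReal_re, Complex.normSq_eq_norm_sq]

lemma trace_outerProd_re {n : ℕ} (w : Fin n → ℂ) :
    ((outerProd w).trace).re = ∑ i : Fin n, ‖w i‖ ^ 2 := by
  simp only [Matrix.trace, Matrix.diag, outerProd_apply, Complex.re_sum]
  exact Finset.sum_congr rfl fun i _ => conj_mul_self_re (w i)

lemma outerProd_isHermitian {n : ℕ} (w : Fin n → ℂ) : (outerProd w).IsHermitian := by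
  ext i j
  simp only [Matrix.conjTranspose_apply, outerProd_apply, star_mul', RCLike.star_def,
    Complex.conj_conj]
  ring

lemma outerProd_posSemidef {n : ℕ} (w : Fin n → ℂ) : (outerProd w).PosSemidef := by
  refine Matrix.PosSemidef.of_dotProduct_mulVec_nonneg (outerProd_isHermitian w) fun x => ?_
  rw [star_dot_outerProd]
  exact conj_mul_self_nonneg _

lemma star_dot_comm {n : ℕ} (w h : Fin n → ℂ) :
    ‖star w ⬝ᵥ h‖ = ‖star h ⬝ᵥ w‖ := by
  rw [show star w ⬝ᵥ h = (starRingEnd ℂ) (star h ⬝ᵥ w) by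
    simp only [dotProduct, map_sum, Pi.star_apply, RCLike.star_def]
    refine Finset.sum_congr rfl fun j _ => ?_
    rw [_root_.map_mul, Complex.conj_conj]; ring]
  exact RCLike.norm_conj _

lemma trace_mul_outerProd_re {n : ℕ} (w h : Fin n → ℂ) :
    ((outerProd w * outerProd h).trace).re = ‖star h ⬝ᵥ w‖ ^ 2 := by
  rw [Matrix.trace_mul_comm, trace_mul_outerProd, star_dot_outerProd, conj_mul_self_re,
    star_dot_comm]

lemma conjTranspose_mul_outerProd_mul {n Ne : ℕ} (G : Matrix (Fin n) (Fin Ne) ℂ)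
    (w : Fin n → ℂ) : Gᴴ * outerProd w * G = outerProd (Gᴴ *ᵥ w) := by
  ext k l
  simp only [Matrix.mul_apply, outerProd_apply, Matrix.mulVec, dotProduct,
    Matrix.conjTranspose_apply, map_sum, Finset.sum_mul, Finset.mul_sum, RCLike.star_def]
  refine Finset.sum_congr rfl fun j _ => Finset.sum_congr rfl fun i _ => ?_
  rw [_root_.map_mul, Complex.conj_conj]
  ring

lemma det_one_add_smul_outerProd {Ne : ℕ} (c : ℝ) (u : Fin Ne → ℂ) :
    ((1 : Matrix (Fin Ne) (Fin Ne) ℂ) + ((c : ℝ) : ℂ) • outerProd u).det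
      = ((1 + c * ∑ k, ‖u k‖ ^ 2 : ℝ) : ℂ) := by
  have h1 : ((c : ℝ) : ℂ) • outerProd u
      = Matrix.replicateCol (Fin 1) ((c : ℂ) • u) * Matrix.replicateRow (Fin 1) (star u) := by
    convert (Matrix.vecMulVec_eq (Fin 1) ((c : ℂ) • u) (star u)) using 1
    ext i j
    simp [outerProd_apply, Matrix.vecMulVec_apply, RCLike.star_def]
    ring
    ext i j
    simp [Matrix.mul_apply]
  rw [h1]
  convert Matrix.det_one_add_replicateCol_mul_replicateRow (ι := Fin 1) ((c : ℂ) • u) (star u) using 1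
  · congr 2
  have h2 : star u ⬝ᵥ ((c : ℂ) • u) = ((c * ∑ k, ‖u k‖ ^ 2 : ℝ) : ℂ) := by
    rw [dotProduct_smul]
    simp only [dotProduct, Pi.star_apply, RCLike.star_def, smul_eq_mul, Complex.ofReal_mul]
    congr 1
    rw [Complex.ofReal_sum]
    refine Finset.sum_congr rfl fun k _ => ?_
    rw [mul_comm, Complex.mul_conj']
    norm_cast
  rw [h2]
  push_cast
  ring

lemma star_dot_self {Ne : ℕ} (x : Fin Ne → ℂ) :
    star x ⬝ᵥ x = ((∑ k, ‖x k‖ ^ 2 : ℝ) : ℂ) := by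
  simp only [dotProduct, Pi.star_apply, RCLike.star_def, Complex.ofReal_sum]
  refine Finset.sum_congr rfl fun k _ => ?_
  rw [mul_comm, Complex.mul_conj']
  norm_cast

lemma cauchy_schwarz_dot {Ne : ℕ} (u x : Fin Ne → ℂ) :
    ‖star u ⬝ᵥ x‖ ^ 2 ≤ (∑ k, ‖u k‖ ^ 2) * ∑ k, ‖x k‖ ^ 2 := by
  have h1 : ‖star u ⬝ᵥ x‖ ≤ ∑ k, ‖u k‖ * ‖x k‖ := by
    refine (norm_sum_le _ _).trans_eq ?_
    refine Finset.sum_congr rfl fun k _ => ?_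
    rw [Pi.star_apply, norm_mul, norm_star]
  calc ‖star u ⬝ᵥ x‖ ^ 2 ≤ (∑ k, ‖u k‖ * ‖x k‖) ^ 2 :=
        pow_le_pow_left₀ (norm_nonneg _) h1 2
    _ ≤ _ := Finset.sum_mul_sq_le_sq_mul_sq _ _ _

lemma psd_iff_norm_le {Ne : ℕ} (r : ℝ) (hr : 0 ≤ r) (u : Fin Ne → ℂ) :
    (((r : ℝ) : ℂ) • (1 : Matrix (Fin Ne) (Fin Ne) ℂ) - outerProd u).PosSemidef
      ↔ ∑ k, ‖u k‖ ^ 2 ≤ r := by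
  have key : ∀ x : Fin Ne → ℂ,
      star x ⬝ᵥ ((((r : ℝ) : ℂ) • (1 : Matrix (Fin Ne) (Fin Ne) ℂ) - outerProd u) *ᵥ x)
        = ((r * ∑ k, ‖x k‖ ^ 2 - ‖star u ⬝ᵥ x‖ ^ 2 : ℝ) : ℂ) := by
    intro x
    rw [Matrix.sub_mulVec, dotProduct_sub, Matrix.smul_mulVec, Matrix.one_mulVec,
      dotProduct_smul, star_dot_outerProd, star_dot_self, Complex.mul_conj',
      star_dot_comm x u, smul_eq_mul]
    push_cast
    ring
  constructor
  · intro h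
    have h2 := h.dotProduct_mulVec_nonneg u
    rw [key u, star_dot_self] at h2
    rw [Complex.zero_le_real] at h2
    have hs : (0:ℝ) ≤ ∑ k, ‖u k‖ ^ 2 :=
      Finset.sum_nonneg fun k _ => sq_nonneg _
    set s := ∑ k, ‖u k‖ ^ 2 with hsdef
    have h3 : ‖((s:ℝ):ℂ)‖ = s := by
      rw [Complex.norm_real, Real.norm_of_nonneg hs]
    rw [h3] at h2
    nlinarith
  · intro h
    refine Matrix.PosSemidef.of_dotProduct_mulVec_nonneg ?_ ?_
    · have hH := outerProd_isHermitian u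
      unfold Matrix.IsHermitian at *
      rw [Matrix.conjTranspose_sub, Matrix.conjTranspose_smul, Matrix.conjTranspose_one, hH,
        Complex.star_def, Complex.conj_ofReal]
    · intro x
      rw [key x, Complex.zero_le_real]
      have := cauchy_schwarz_dot u x
      have hx : (0:ℝ) ≤ ∑ k, ‖x k‖ ^ 2 := Finset.sum_nonneg fun k _ => sq_nonneg _
      nlinarith

lemma rank_one_decomp {n : ℕ} (A : Matrix (Fin n) (Fin n) ℂ)
    (hA : A.PosSemidef) (hr : A.rank ≤ 1) : ∃ w : Fin n → ℂ, A = outerProd w := by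
  by_cases hA0 : A = 0
  · refine ⟨0, ?_⟩
    subst hA0
    ext i j
    simp [outerProd_apply]
  rw [Matrix.rank] at hr
  obtain ⟨v, hv⟩ := finrank_le_one_iff.mp hr
  have hcol : ∀ k, ∃ c : ℂ, ∀ j, c * (v : Fin n → ℂ) j = A j k := by
    intro k
    have hmem : A *ᵥ Pi.single k 1 ∈ LinearMap.range A.mulVecLin :=
      ⟨Pi.single k 1, rfl⟩
    obtain ⟨c, hc⟩ := hv ⟨_, hmem⟩
    refine ⟨c, fun j => ?_⟩
    have h2 := congrArg Subtype.val hc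
    have h3 := congrFun h2 j
    simpa [Matrix.mulVec_single] using h3
  choose c hc using hcol
  have herm : ∀ j k, A k j = (starRingEnd ℂ) (A j k) := by
    intro j k
    conv_lhs => rw [← hA.1]
    rfl
  obtain ⟨j0, k0, hjk⟩ : ∃ j k, A j k ≠ 0 := by
    by_contra hcon
    push_neg at hcon
    exact hA0 (by ext j k; exact hcon j k)
  have hvj0 : (v : Fin n → ℂ) j0 ≠ 0 := fun h => hjk (by rw [← hc k0 j0, h, mul_zero])
  have hck0 : c k0 ≠ 0 := fun h => hjk (by rw [← hc k0 j0, h, zero_mul])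
  have hkj : A k0 j0 ≠ 0 := by
    rw [herm j0 k0]
    simpa using hjk
  have hcj0 : c j0 ≠ 0 := fun h => hkj (by rw [← hc j0 k0, h, zero_mul])
  have hii : A j0 j0 ≠ 0 := by
    rw [← hc j0 j0]
    exact mul_ne_zero hcj0 hvj0
  set i := j0
  have hpos : 0 ≤ A i i := by
    have h2 := hA.dotProduct_mulVec_nonneg (Pi.single i 1)
    have : star (Pi.single i (1:ℂ)) ⬝ᵥ A *ᵥ Pi.single i 1 = A i i := by
      rw [Matrix.mulVec_single]
      simp [dotProduct, Pi.single_apply, apply_ite, Finset.sum_ite_eq']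
    rwa [this] at h2
  rw [Complex.le_def] at hpos
  set r : ℝ := (A i i).re with hrdef
  have hAii : A i i = (r : ℂ) := Complex.ext rfl (by simp [hpos.2.symm])
  have hrpos : 0 < r := by
    rcases lt_or_eq_of_le hpos.1 with h | h
    · simpa using h
    · exact absurd (by rw [hAii, ← h]; simp) hii
  have hkey : ∀ j k, A j i * (starRingEnd ℂ) (A k i) = A j k * (r : ℂ) := by
    intro j k
    rw [← herm k i, ← hAii, ← hc i j, ← hc k i, ← hc k j, ← hc i i]
    ring
  refine ⟨fun j => A j i * (((Real.sqrt r : ℝ) : ℂ))⁻¹, ?_⟩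
  ext j k
  rw [outerProd_apply]
  have hs : ((Real.sqrt r : ℝ) : ℂ) ≠ 0 := by
    simp only [ne_eq, Complex.ofReal_eq_zero]
    positivity
  have hsq : ((Real.sqrt r : ℝ) : ℂ) * ((Real.sqrt r : ℝ) : ℂ) = (r : ℂ) := by
    rw [← Complex.ofReal_mul, Real.mul_self_sqrt hrpos.le]
  rw [_root_.map_mul, map_inv₀, Complex.conj_ofReal]
  field_simp
  rw [sq, hsq, hkey j k]

lemma r1_iff_r0 {n Ne : ℕ} {M S : Type*} [Fintype M] [Fintype S] [DecidableEq S]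
    (Λ : M → Matrix (Fin n) (Fin n) ℂ) (P : M → ℝ) (q : M → S → ℝ)
    (hch : S → Fin n → ℂ) (G : Matrix (Fin n) (Fin Ne) ℂ)
    (σ2 σe2 : ℝ) (κreq κtol : S → ℝ) (hσe2 : 0 < σe2) (hκtol : ∀ ρ, 0 ≤ κtol ρ)
    (w : S → Fin n → ℂ) :
    R1Feasible Λ P q hch G σ2 σe2 κreq κtol (fun ρ => outerProd (w ρ))
      ↔ R0Feasible Λ P q hch G σ2 σe2 κreq κtol w := by
  have hC7 : ∀ ρ : S,
      ((((σe2 * κtol ρ : ℝ) : ℂ) • (1 : Matrix (Fin Ne) (Fin Ne) ℂ)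
        - Gᴴ * outerProd (w ρ) * G).PosSemidef
      ↔ ((1 : Matrix (Fin Ne) (Fin Ne) ℂ)
        + ((σe2⁻¹ : ℝ) : ℂ) • (Gᴴ * outerProd (w ρ) * G)).det ≤ ((1 + κtol ρ : ℝ) : ℂ)) := by
    intro ρ
    rw [conjTranspose_mul_outerProd_mul, det_one_add_smul_outerProd,
      psd_iff_norm_le _ (mul_nonneg hσe2.le (hκtol ρ)), Complex.real_le_real]
    exact (inv_mul_le_iff₀ hσe2).symm.trans (add_le_add_iff_left (1:ℝ)).symm
  constructor
  · rintro ⟨_, h4, h5, h6, h7⟩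
    refine ⟨fun m ρ => ?_, fun m => ?_, fun ρ => ?_, fun ρ => (hC7 ρ).mp (h7 ρ)⟩
    · have := h4 m ρ
      rwa [trace_mul_outerProd] at this
    · have := h5 m
      simp only [trace_mul_outerProd] at this
      exact this
    · have := h6 ρ
      simp only [trace_mul_outerProd_re] at this
      exact this
  · rintro ⟨h4, h5, h6, h7⟩
    refine ⟨fun ρ => outerProd_posSemidef _, fun m ρ => ?_, fun m => ?_, fun ρ => ?_,
      fun ρ => (hC7 ρ).mpr (h7 ρ)⟩
    · rw [trace_mul_outerProd]
      exact h4 m ρ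
    · simp only [trace_mul_outerProd]
      exact h5 m
    · simp only [trace_mul_outerProd_re]
      exact h6 ρ

end AuxLemmas

/-- Tightness of the semidefinite relaxation: if some R1-optimal family
`(W*_ρ)` has `rank W*_ρ ≤ 1` for all `ρ`, then R0 is feasible, and the
infimum of the total transmit power `Σ_ρ ‖w_ρ‖²` over R0-feasible families
equals `Σ_ρ tr W*_ρ`, which is also the infimum of `Σ_ρ tr W_ρ` over
R1-feasible families. -/
theorem sdp_relaxation_tight {M S : Type*} [Fintype M] [Fintype S] [DecidableEq S]
    (Nt Ne n : ℕ) (hNt : 0 < Nt) (hNe : 0 < Ne) (hn : n = Fintype.card M * Nt)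
    (Λ : M → Matrix (Fin n) (Fin n) ℂ) (P : M → ℝ) (q : M → S → ℝ)
    (hch : S → Fin n → ℂ) (G : Matrix (Fin n) (Fin Ne) ℂ)
    (σ2 σe2 : ℝ) (κreq κtol : S → ℝ)
    (hΛdiag : ∀ m, ∀ i j : Fin n, i ≠ j → Λ m i j = 0)
    (hΛ01 : ∀ m, ∀ i : Fin n, Λ m i i = 0 ∨ Λ m i i = 1)
    (hΛsum : ∑ m : M, Λ m = 1)
    (hP : ∀ m, 0 < P m) (hq : ∀ m ρ, q m ρ = 0 ∨ q m ρ = 1)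
    (hσ2 : 0 < σ2) (hσe2 : 0 < σe2)
    (hκreq : ∀ ρ, 0 < κreq ρ) (hκtol : ∀ ρ, 0 ≤ κtol ρ)
    (Wstar : S → Matrix (Fin n) (Fin n) ℂ)
    (hWstar : R1Feasible Λ P q hch G σ2 σe2 κreq κtol Wstar)
    (hrank : ∀ ρ : S, (Wstar ρ).rank ≤ 1)
    (hopt : ∀ W : S → Matrix (Fin n) (Fin n) ℂ,
        R1Feasible Λ P q hch G σ2 σe2 κreq κtol W →
        ∑ ρ : S, ((Wstar ρ).trace).re ≤ ∑ ρ : S, ((W ρ).trace).re) :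
    (∃ w : S → Fin n → ℂ, R0Feasible Λ P q hch G σ2 σe2 κreq κtol w) ∧
      sInf {p : ℝ | ∃ w : S → Fin n → ℂ,
          R0Feasible Λ P q hch G σ2 σe2 κreq κtol w ∧
          p = ∑ ρ : S, ∑ i : Fin n, ‖w ρ i‖ ^ 2} = ∑ ρ : S, ((Wstar ρ).trace).re ∧
      sInf {p : ℝ | ∃ W : S → Matrix (Fin n) (Fin n) ℂ,
          R1Feasible Λ P q hch G σ2 σe2 κreq κtol W ∧
          p = ∑ ρ : S, ((W ρ).trace).re} = ∑ ρ : S, ((Wstar ρ).trace).re := by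
  have decomp : ∀ ρ : S, ∃ wv : Fin n → ℂ, Wstar ρ = outerProd wv :=
    fun ρ => rank_one_decomp (Wstar ρ) (hWstar.1 ρ) (hrank ρ)
  choose w hw using decomp
  have hWeq : Wstar = fun ρ => outerProd (w ρ) := funext hw
  have hR0 : R0Feasible Λ P q hch G σ2 σe2 κreq κtol w := by
    rw [← r1_iff_r0 Λ P q hch G σ2 σe2 κreq κtol hσe2 hκtol w, ← hWeq]
    exact hWstar
  have hobj : ∑ ρ : S, ((Wstar ρ).trace).re = ∑ ρ : S, ∑ i : Fin n, ‖w ρ i‖ ^ 2 := by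
    refine Finset.sum_congr rfl fun ρ _ => ?_
    rw [hw ρ, trace_outerProd_re]
  refine ⟨⟨w, hR0⟩, ?_, ?_⟩
  · refine IsLeast.csInf_eq ⟨⟨w, hR0, hobj⟩, ?_⟩
    rintro p ⟨w', hw', rfl⟩
    have hfeas := (r1_iff_r0 Λ P q hch G σ2 σe2 κreq κtol hσe2 hκtol w').mpr hw'
    have := hopt _ hfeas
    calc ∑ ρ : S, ((Wstar ρ).trace).re
        ≤ ∑ ρ : S, ((outerProd (w' ρ)).trace).re := this
      _ = ∑ ρ : S, ∑ i : Fin n, ‖w' ρ i‖ ^ 2 :=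
          Finset.sum_congr rfl fun ρ _ => trace_outerProd_re _
  · refine IsLeast.csInf_eq ⟨⟨Wstar, hWstar, rfl⟩, ?_⟩
    rintro p ⟨W, hW, rfl⟩
    exact hopt W hW
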